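/- Let α ∈ (0,1) and let X be an ℕ-valued random variable satisfying the recursive distributional equation. Then for every s ∈ (0,1], the probability generating function satisfies the quadratic equation G(s)² − ((2−p)s + p)·G(s) + s·exp(α(s−1)) = 0. -/

import Mathlib

open scoped ENNReal

/-- The Poisson(α) probability mass function on ℕ. -/
noncomputable def poissonPMF (α : ℝ) (k : ℕ) : ℝ≥0∞ :=
  ENNReal.ofReal (Real.exp (-α) * α ^ k / (Nat.factorial k))

/-- The Geometric(1/2) pmf: P(N = k) = (1/2)^(k+1) for k ≥ 0. -/
noncomputable def geomHalf (k : ℕ) : ℝ≥0∞ := (1 / 2) ^ (k + 1)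

/-- The law of (X - 1)⁺ when X has law μ on ℕ. -/
noncomputable def shiftLaw (μ : ℕ → ℝ≥0∞) (k : ℕ) : ℝ≥0∞ :=
  if k = 0 then μ 0 + μ 1 else μ (k + 1)

/-- Convolution of two (sub-)pmfs on ℕ: the law of an independent sum. -/
noncomputable def convAdd (f g : ℕ → ℝ≥0∞) (k : ℕ) : ℝ≥0∞ :=
  ∑ j ∈ Finset.range (k + 1), f j * g (k - j)

/-- n-fold convolution of a pmf on ℕ: the law of a sum of n i.i.d. copies. -/
noncomputable def iterConv (f : ℕ → ℝ≥0∞) : ℕ → ℕ → ℝ≥0∞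
  | 0 => fun k => if k = 0 then 1 else 0
  | n + 1 => convAdd (iterConv f n) f

/-- μ is the law of an ℕ-valued random variable X satisfying the RDE
    X =_d P + ∑_{i=1}^N (X_i - 1)⁺, with P ~ Poisson(α), N ~ Geom(1/2),
    X_i i.i.d. with law μ, all independent. -/
def SatisfiesRDE (α : ℝ) (μ : ℕ → ℝ≥0∞) : Prop :=
  (∑' k, μ k) = 1 ∧
  ∀ k, μ k = ∑' n, geomHalf n * convAdd (poissonPMF α) (iterConv (shiftLaw μ) n) k

/-- The probability generating function G(s) = E[s^X]. -/
noncomputable def pgf (μ : ℕ → ℝ≥0∞) (s : ℝ) : ℝ := ∑' k, (μ k).toReal * s ^ k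

/-- The mean E[X] = ∑ k · P(X = k), valued in [0,∞]. -/
noncomputable def meanENN (μ : ℕ → ℝ≥0∞) : ℝ≥0∞ := ∑' k : ℕ, (k : ℝ≥0∞) * μ k

/-- For α ∈ (0,1) and s ∈ (0,1], the pgf satisfies
G(s)² − ((2−p)s + p)·G(s) + s·exp(α(s−1)) = 0. -/
noncomputable def pgfE (f : ℕ → ℝ≥0∞) (t : ℝ≥0∞) : ℝ≥0∞ := ∑' k, f k * t ^ k

lemma ennCauchy (F G : ℕ → ℝ≥0∞) :
    (∑' j, F j) * (∑' j, G j) = ∑' k, ∑ j ∈ Finset.range (k + 1), F j * G (k - j) := by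
  have h1 : (∑' j, F j) * (∑' j, G j) = ∑' j, ∑' i, F j * G i := by
    rw [← ENNReal.tsum_mul_right]
    exact tsum_congr fun j => (ENNReal.tsum_mul_left).symm
  rw [h1, ← ENNReal.tsum_prod,
    ← Finset.HasAntidiagonal.sigmaAntidiagonalEquivProd.tsum_eq (fun p : ℕ × ℕ => F p.1 * G p.2),
    ENNReal.tsum_sigma']
  refine tsum_congr fun k => ?_
  rw [tsum_fintype]
  simp only [Finset.HasAntidiagonal.sigmaAntidiagonalEquivProd_apply]
  rw [Finset.sum_coe_sort (Finset.HasAntidiagonal.antidiagonal k) (fun p : ℕ × ℕ => F p.1 * G p.2),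
    Finset.Nat.sum_antidiagonal_eq_sum_range_succ_mk]

lemma pgfE_conv (f g : ℕ → ℝ≥0∞) (t : ℝ≥0∞) :
    pgfE (convAdd f g) t = pgfE f t * pgfE g t := by
  unfold pgfE convAdd
  rw [ennCauchy]
  refine tsum_congr fun k => ?_
  rw [Finset.sum_mul]
  refine Finset.sum_congr rfl fun j hj => ?_
  have hjk : j ≤ k := Nat.lt_succ_iff.mp (Finset.mem_range.mp hj)
  have : t ^ k = t ^ j * t ^ (k - j) := by
    rw [← pow_add, Nat.add_sub_cancel' hjk]
  rw [this]; ring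

lemma pgfE_iter (f : ℕ → ℝ≥0∞) (t : ℝ≥0∞) (n : ℕ) :
    pgfE (iterConv f n) t = (pgfE f t) ^ n := by
  induction n with
  | zero =>
    unfold pgfE iterConv
    rw [pow_zero]
    rw [tsum_eq_single 0 (by intro b hb; simp [hb])]
    simp
  | succ n ih =>
    show pgfE (convAdd (iterConv f n) f) t = _
    rw [pgfE_conv, ih, pow_succ]

lemma pgfE_le (f : ℕ → ℝ≥0∞) (t : ℝ≥0∞) (ht : t ≤ 1) : pgfE f t ≤ ∑' k, f k := by
  refine ENNReal.tsum_le_tsum fun k => ?_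
  calc f k * t ^ k ≤ f k * 1 := mul_le_mul_right (pow_le_one' ht k) _
  _ = f k := mul_one _

lemma tsum_shiftLaw (μ : ℕ → ℝ≥0∞) : ∑' k, shiftLaw μ k = ∑' k, μ k := by
  have h1 : ∑' k, shiftLaw μ k = shiftLaw μ 0 + ∑' k : ℕ, shiftLaw μ (k + 1) :=
    tsum_eq_zero_add' ENNReal.summable
  have h2 : ∑' k, μ k = μ 0 + ∑' k : ℕ, μ (k + 1) := tsum_eq_zero_add' ENNReal.summable
  have h3 : ∑' k : ℕ, μ (k + 1) = μ 1 + ∑' k : ℕ, μ (k + 1 + 1) :=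
    tsum_eq_zero_add' ENNReal.summable
  have h4 : ∑' k : ℕ, shiftLaw μ (k + 1) = ∑' k : ℕ, μ (k + 1 + 1) :=
    tsum_congr fun k => by simp [shiftLaw]
  rw [h1, h2, h3, h4]
  simp [shiftLaw, add_assoc]

lemma shift_identity (μ : ℕ → ℝ≥0∞) (t : ℝ≥0∞) :
    t * pgfE (shiftLaw μ) t + μ 0 = pgfE μ t + t * μ 0 := by
  unfold pgfE
  have h1 : ∑' k : ℕ, shiftLaw μ k * t ^ k
      = (μ 0 + μ 1) + ∑' k : ℕ, μ (k + 1 + 1) * t ^ (k + 1) := by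
    rw [tsum_eq_zero_add' (f := fun k : ℕ => shiftLaw μ k * t ^ k) ENNReal.summable]
    exact congrArg₂ (· + ·) (by simp [shiftLaw]) (tsum_congr fun k => by simp [shiftLaw])
  have h2 : ∑' k : ℕ, μ k * t ^ k
      = μ 0 + (μ 1 * t + ∑' k : ℕ, μ (k + 1 + 1) * t ^ (k + 1 + 1)) := by
    rw [tsum_eq_zero_add' (f := fun k : ℕ => μ k * t ^ k) ENNReal.summable,
      tsum_eq_zero_add' (f := fun k : ℕ => μ (k + 1) * t ^ (k + 1)) ENNReal.summable]
    simp
  rw [h1, h2]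
  have h3 : t * ∑' k : ℕ, μ (k + 1 + 1) * t ^ (k + 1)
      = ∑' k : ℕ, μ (k + 1 + 1) * t ^ (k + 1 + 1) := by
    rw [← ENNReal.tsum_mul_left]
    exact tsum_congr fun k => by rw [← mul_assoc, mul_comm t, mul_assoc, ← pow_succ']
  rw [mul_add, mul_add, h3]
  ring

lemma pgfE_poisson (α s : ℝ) (hα : 0 ≤ α) (hs : 0 ≤ s) :
    pgfE (poissonPMF α) (ENNReal.ofReal s) = ENNReal.ofReal (Real.exp (α * (s - 1))) := by
  unfold pgfE poissonPMF
  have hterm : ∀ k : ℕ, ENNReal.ofReal (Real.exp (-α) * α ^ k / (Nat.factorial k))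
      * (ENNReal.ofReal s) ^ k
      = ENNReal.ofReal (Real.exp (-α) * ((α * s) ^ k / (Nat.factorial k))) := by
    intro k
    rw [← ENNReal.ofReal_pow hs, ← ENNReal.ofReal_mul (by positivity)]
    congr 1
    rw [mul_pow]
    field_simp
  rw [tsum_congr hterm]
  have hnn : ∀ k : ℕ, 0 ≤ Real.exp (-α) * ((α * s) ^ k / (Nat.factorial k)) := by
    intro k; positivity
  have hsumm : Summable fun k : ℕ => Real.exp (-α) * ((α * s) ^ k / (Nat.factorial k)) :=
    (Real.summable_pow_div_factorial (α * s)).mul_left _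
  rw [← ENNReal.ofReal_tsum_of_nonneg hnn hsumm]
  congr 1
  rw [tsum_mul_left]
  have hexp : ∑' k : ℕ, (α * s) ^ k / (Nat.factorial k) = Real.exp (α * s) := by
    rw [Real.exp_eq_exp_ℝ, NormedSpace.exp_eq_tsum_div]
  rw [hexp, ← Real.exp_add]
  ring_nf

lemma pgfE_toReal (f : ℕ → ℝ≥0∞) (hf : ∀ k, f k ≠ ∞) (s : ℝ) (hs : 0 ≤ s) :
    (pgfE f (ENNReal.ofReal s)).toReal = ∑' k, (f k).toReal * s ^ k := by
  unfold pgfE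
  rw [ENNReal.tsum_toReal_eq (fun k => by
    exact ENNReal.mul_ne_top (hf k) (ENNReal.pow_ne_top ENNReal.ofReal_ne_top))]
  refine tsum_congr fun k => ?_
  rw [ENNReal.toReal_mul, ENNReal.toReal_pow, ENNReal.toReal_ofReal hs]

theorem pgf_quadratic_equation
    (α : ℝ) (hα0 : 0 < α) (hα1 : α < 1)
    (μ : ℕ → ℝ≥0∞) (hμ : SatisfiesRDE α μ)
    (p : ℝ) (hp : p = (μ 0).toReal) :
    ∀ s ∈ Set.Ioc (0 : ℝ) 1,
      (pgf μ s) ^ 2 - ((2 - p) * s + p) * pgf μ s + s * Real.exp (α * (s - 1)) = 0 := by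
  rintro s ⟨hs0, hs1⟩
  obtain ⟨hsum, hrde⟩ := hμ
  set t : ℝ≥0∞ := ENNReal.ofReal s with ht_def
  have ht1 : t ≤ 1 := ENNReal.ofReal_le_one.mpr hs1
  have hfin : ∀ k, μ k ≠ ∞ := by
    intro k
    exact ne_top_of_le_ne_top (by simp [hsum]) (ENNReal.le_tsum k)
  set G : ℝ≥0∞ := pgfE μ t with hG_def
  set H : ℝ≥0∞ := pgfE (shiftLaw μ) t with hH_def
  have hG_le : G ≤ 1 := le_trans (pgfE_le μ t ht1) (le_of_eq hsum)
  have hH_le : H ≤ 1 := le_trans (pgfE_le _ t ht1)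
    (le_of_eq (by rw [tsum_shiftLaw]; exact hsum))
  have hG_top : G ≠ ∞ := ne_top_of_le_ne_top ENNReal.one_ne_top hG_le
  have hH_top : H ≠ ∞ := ne_top_of_le_ne_top ENNReal.one_ne_top hH_le
  set π : ℝ≥0∞ := pgfE (poissonPMF α) t with hπ_def
  have hπ : π = ENNReal.ofReal (Real.exp (α * (s - 1))) := pgfE_poisson α s hα0.le hs0.le
  have hπ_top : π ≠ ∞ := by rw [hπ]; exact ENNReal.ofReal_ne_top
  -- G as a geometric series
  have hGgeom : G = ∑' n : ℕ, geomHalf n * (π * H ^ n) := by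
    rw [hG_def]
    unfold pgfE
    calc ∑' k, μ k * t ^ k
        = ∑' k, (∑' n, geomHalf n * convAdd (poissonPMF α) (iterConv (shiftLaw μ) n) k)
            * t ^ k := tsum_congr fun k => by rw [← hrde k]
      _ = ∑' k, ∑' n, geomHalf n * convAdd (poissonPMF α) (iterConv (shiftLaw μ) n) k
            * t ^ k := tsum_congr fun k => ENNReal.tsum_mul_right.symm
      _ = ∑' n, ∑' k, geomHalf n * convAdd (poissonPMF α) (iterConv (shiftLaw μ) n) k
            * t ^ k := ENNReal.tsum_comm
      _ = ∑' n, geomHalf n *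
            ∑' k, convAdd (poissonPMF α) (iterConv (shiftLaw μ) n) k * t ^ k := by
          refine tsum_congr fun n => ?_
          rw [← ENNReal.tsum_mul_left]
          exact tsum_congr fun k => (mul_assoc _ _ _)
      _ = ∑' n, geomHalf n * (π * H ^ n) := by
          refine tsum_congr fun n => ?_
          congr 1
          rw [show (∑' k, convAdd (poissonPMF α) (iterConv (shiftLaw μ) n) k * t ^ k)
              = pgfE (convAdd (poissonPMF α) (iterConv (shiftLaw μ) n)) t from rfl,
            pgfE_conv, pgfE_iter, ← hπ_def, ← hH_def]
  have hterm : ∀ n : ℕ, geomHalf n * (π * H ^ n) = (2⁻¹ * π) * (2⁻¹ * H) ^ n := by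
    intro n
    unfold geomHalf
    rw [one_div, pow_succ, mul_pow]
    ring
  set a : ℝ≥0∞ := 1 - 2⁻¹ * H with ha_def
  have hhalfH : 2⁻¹ * H ≤ 2⁻¹ := by
    calc 2⁻¹ * H ≤ 2⁻¹ * 1 := mul_le_mul_right hH_le _
    _ = 2⁻¹ := mul_one _
  have ha0 : a ≠ 0 := by
    rw [ha_def, ← pos_iff_ne_zero, tsub_pos_iff_lt]
    exact lt_of_le_of_lt hhalfH (by norm_num)
  have ha_top : a ≠ ∞ := ne_top_of_le_ne_top ENNReal.one_ne_top tsub_le_self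
  have hG_eq : G = (2⁻¹ * π) * a⁻¹ := by
    rw [hGgeom, tsum_congr hterm, ENNReal.tsum_mul_left, ENNReal.tsum_geometric]
  have hGa : G * a = 2⁻¹ * π := by
    rw [hG_eq, mul_assoc, ENNReal.inv_mul_cancel ha0 ha_top, mul_one]
  have haH : a + 2⁻¹ * H = 1 := tsub_add_cancel_of_le (le_trans hhalfH (by norm_num))
  have hE1 : G = 2⁻¹ * π + G * (2⁻¹ * H) := by
    calc G = G * (a + 2⁻¹ * H) := by rw [haH, mul_one]
    _ = G * a + G * (2⁻¹ * H) := mul_add _ _ _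
    _ = 2⁻¹ * π + G * (2⁻¹ * H) := by rw [hGa]
  have hE2 : t * H + μ 0 = G + t * μ 0 := shift_identity μ t
  -- go to real numbers
  set g : ℝ := G.toReal with hg_def
  set h : ℝ := H.toReal with hh_def
  set e : ℝ := Real.exp (α * (s - 1)) with he_def
  have hπR : π.toReal = e := by rw [hπ, ENNReal.toReal_ofReal (Real.exp_nonneg _)]
  have htR : t.toReal = s := ENNReal.toReal_ofReal hs0.le
  have hμ0_top : μ 0 ≠ ∞ := hfin 0
  have ht_top : t ≠ ∞ := ENNReal.ofReal_ne_top
  have e1 : g = 2⁻¹ * e + g * (2⁻¹ * h) := by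
    have := congrArg ENNReal.toReal hE1
    rwa [ENNReal.toReal_add (by finiteness) (by finiteness), ENNReal.toReal_mul,
      ENNReal.toReal_mul, ENNReal.toReal_mul, hπR,
      show ((2 : ℝ≥0∞)⁻¹).toReal = 2⁻¹ by simp] at this
  have e2 : s * h + p = g + s * p := by
    have := congrArg ENNReal.toReal hE2
    rwa [ENNReal.toReal_add (by finiteness) (by finiteness),
      ENNReal.toReal_add (by finiteness) (by finiteness),
      ENNReal.toReal_mul, ENNReal.toReal_mul, htR, ← hp] at this
  have hpgf : pgf μ s = g := by
    rw [hg_def, hG_def, pgfE_toReal μ hfin s hs0.le, pgf]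
  rw [hpgf]
  linear_combination (-2 * s) * e1 + (-g) * e2
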